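/- The 2-matching inequality is valid: for any feasible CAGVRP solution with ground-vehicle edge incidence vector x ∈ {0,1}^E and self-assignment variables y_{ii} ∈ {0,1} satisfying the degree constraints Σ_{j} x_{ij} = 2 y_{ii} for all i, any handle H ⊆ T and teeth I ⊆ δ(H) such that no two edges of I share an endpoint and |I| is odd, it holds that Σ_{e∈γ(H)} x_e + Σ_{e∈I} x_e ≤ Σ_{i∈H} y_{ii} + (|I|−1)/2. -/
import Mathlib


theorem stmt_5 (n : ℕ) (x y : Fin n → Fin n → ℝ)
    (hx01 : ∀ i j, x i j = 0 ∨ x i j = 1) (hxsym : ∀ i j, x i j = x j i)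
    (hxloop : ∀ i, x i i = 0)
    (hy01 : ∀ i, y i i = 0 ∨ y i i = 1)
    (hdeg : ∀ i, ∑ j, x i j = 2 * y i i)
    (H : Finset (Fin n)) (I : Finset (Fin n × Fin n))
    (hI : ∀ e ∈ I, e.1 ∈ H ∧ e.2 ∉ H)
    (hmatch : ∀ e ∈ I, ∀ f ∈ I, e ≠ f →
      e.1 ≠ f.1 ∧ e.2 ≠ f.2 ∧ e.1 ≠ f.2 ∧ e.2 ≠ f.1)
    (hodd : Odd I.card) :
    (∑ a ∈ H, ∑ b ∈ H, x a b) / 2 + ∑ e ∈ I, x e.1 e.2 ≤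
      ∑ i ∈ H, y i i + ((I.card : ℝ) - 1) / 2 := by
  classical
  -- counts
  set F : Finset (Fin n × Fin n) := (H ×ˢ H).filter (fun e => x e.1 e.2 = 1) with hF
  set G : Finset (Fin n × Fin n) := (H ×ˢ Hᶜ).filter (fun e => x e.1 e.2 = 1) with hG
  set M : Finset (Fin n × Fin n) := I.filter (fun e => x e.1 e.2 = 1) with hM
  set Y : Finset (Fin n) := H.filter (fun i => y i i = 1) with hY
  -- sums as counts
  have sum_count : ∀ (s : Finset (Fin n × Fin n)),
      ∑ e ∈ s, x e.1 e.2 = ((s.filter (fun e => x e.1 e.2 = 1)).card : ℝ) := by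
    intro s
    rw [← Finset.sum_boole]
    refine Finset.sum_congr rfl fun e _ => ?_
    rcases hx01 e.1 e.2 with h | h <;> simp [h]
  have hT : ∑ a ∈ H, ∑ b ∈ H, x a b = (F.card : ℝ) := by
    rw [← Finset.sum_product']; exact sum_count _
  have hS : ∑ a ∈ H, ∑ b ∈ Hᶜ, x a b = (G.card : ℝ) := by
    rw [← Finset.sum_product']; exact sum_count _
  have hP : ∑ e ∈ I, x e.1 e.2 = (M.card : ℝ) := sum_count I
  have hYc : ∑ i ∈ H, y i i = (Y.card : ℝ) := by
    rw [← Finset.sum_boole]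
    refine Finset.sum_congr rfl fun i _ => ?_
    rcases hy01 i with h | h <;> simp [h]
  -- degree sum over H
  have hdegsum : (F.card : ℝ) + (G.card : ℝ) = 2 * (Y.card : ℝ) := by
    have h1 : ∑ i ∈ H, ∑ j, x i j = 2 * ∑ i ∈ H, y i i := by
      rw [Finset.mul_sum]
      exact Finset.sum_congr rfl fun i _ => hdeg i
    have h2 : ∑ i ∈ H, ∑ j, x i j
        = ∑ a ∈ H, ∑ b ∈ H, x a b + ∑ a ∈ H, ∑ b ∈ Hᶜ, x a b := by
      rw [← Finset.sum_add_distrib]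
      exact Finset.sum_congr rfl fun i _ =>
        (Finset.sum_add_sum_compl H (fun j => x i j)).symm
    rw [← hT, ← hS, ← h2, h1, hYc]
  -- M.card ≤ G.card
  have hMG : M ⊆ G := by
    intro e he
    simp only [hM, hG, Finset.mem_filter, Finset.mem_product, Finset.mem_compl] at he ⊢
    exact ⟨⟨(hI e he.1).1, (hI e he.1).2⟩, he.2⟩
  have hMGc : M.card ≤ G.card := Finset.card_le_card hMG
  have hMI : M.card ≤ I.card := Finset.card_le_card (Finset.filter_subset _ _)
  -- F.card is even, via the fixed-point-free involution swap
  have hFeven : Even F.card := by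
    have hsplit : F = F.filter (fun e => e.1 < e.2) ∪ F.filter (fun e => e.2 < e.1) := by
      ext e
      simp only [Finset.mem_union, Finset.mem_filter]
      constructor
      · intro he
        have hne : e.1 ≠ e.2 := by
          intro h
          have hx1 : x e.1 e.2 = 1 := (Finset.mem_filter.mp he).2
          rw [← h, hxloop] at hx1
          norm_num at hx1
        rcases lt_or_gt_of_ne hne with h | h
        · exact Or.inl ⟨he, h⟩
        · exact Or.inr ⟨he, h⟩
      · rintro (⟨he, _⟩ | ⟨he, _⟩) <;> exact he
    have hdisj : Disjoint (F.filter (fun e => e.1 < e.2)) (F.filter (fun e => e.2 < e.1)) := by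
      rw [Finset.disjoint_left]
      intro e h1 h2
      have a1 := (Finset.mem_filter.mp h1).2
      have a2 := (Finset.mem_filter.mp h2).2
      exact absurd a2 (not_lt.mpr a1.le)
    have hcardeq : (F.filter (fun e => e.1 < e.2)).card
        = (F.filter (fun e => e.2 < e.1)).card := by
      apply Finset.card_bij (fun e _ => e.swap)
      · intro e he
        simp only [Finset.mem_filter, hF, Finset.mem_product, Prod.fst_swap,
          Prod.snd_swap] at he ⊢
        exact ⟨⟨⟨he.1.1.2, he.1.1.1⟩, (hxsym e.2 e.1).trans he.1.2⟩, he.2⟩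
      · intro a _ b _ hab
        exact Prod.swap_injective hab
      · intro e he
        refine ⟨e.swap, ?_, (Prod.swap_swap e).symm⟩
        simp only [Finset.mem_filter, hF, Finset.mem_product, Prod.fst_swap,
          Prod.snd_swap] at he ⊢
        exact ⟨⟨⟨he.1.1.2, he.1.1.1⟩, (hxsym e.2 e.1).trans he.1.2⟩, he.2⟩
    rw [hsplit, Finset.card_union_of_disjoint hdisj, hcardeq]
    exact ⟨_, rfl⟩
  -- G.card is even
  have hnat : F.card + G.card = 2 * Y.card := by exact_mod_cast hdegsum
  have hGeven : Even G.card := by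
    have : Even (F.card + G.card) := ⟨Y.card, by omega⟩
    rcases hFeven with ⟨a, ha⟩
    rcases this with ⟨b, hb⟩
    exact ⟨b - a, by omega⟩
  -- key integer inequality: 2 * M.card - G.card ≤ I.card - 1
  have hkey : 2 * (M.card : ℤ) - G.card ≤ (I.card : ℤ) - 1 := by
    rcases hGeven with ⟨g, hg⟩
    rcases hodd with ⟨k, hk⟩
    omega
  -- conclude
  rw [hT, hP, hYc]
  have hkeyR : 2 * (M.card : ℝ) - (G.card : ℝ) ≤ (I.card : ℝ) - 1 := by
    exact_mod_cast hkey
  linarith
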